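/- For all integers i,j one has k(i,j) ≡ i + j (mod 2), |k(i+1,j) − k(i,j)| = 1, and |k(i,j+1) − k(i,j)| = 1; that is, the (r,s,t)-slanted height function defines a stepped surface. -/
import Mathlib

private lemma floorQ (a d : ℤ) (hd : 0 < d) : ⌊((a:ℚ))/((d:ℚ))⌋ = a / d := by
  have h : ((d.toNat : ℕ) : ℤ) = d := Int.toNat_of_nonneg hd.le
  rw [← h]
  push_cast
  exact Rat.floor_intCast_div_natCast a d.toNat

private lemma div_step (a c d : ℤ) (hd : 0 < d) (hc0 : 0 ≤ c) (hcd : c ≤ d) :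
    a / d ≤ (a + c) / d ∧ (a + c) / d ≤ a / d + 1 := by
  constructor
  · exact Int.ediv_le_ediv hd (by omega)
  · have h1 : (a + c) / d ≤ (a + d) / d := Int.ediv_le_ediv hd (by omega)
    have h2 : (a + d) / d = a / d + 1 := by
      have := Int.add_mul_ediv_right a 1 hd.ne'; simpa using this
    omega

theorem slanted_height_is_stepped_surface
    (r s t : ℤ) (hr0 : 0 ≤ r) (hrt : r < t) (hs0 : 0 ≤ s) (hst : s < t)
    (k : ℤ → ℤ → ℤ)
    (hk : ∀ i j : ℤ,
      k i j = i + j - 2 * ⌊((r * i + s * j + t * (i + j) : ℤ) : ℚ) / ((2 * t : ℤ) : ℚ)⌋) :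
    ∀ i j : ℤ,
      k i j ≡ i + j [ZMOD 2] ∧
      |k (i + 1) j - k i j| = 1 ∧
      |k i (j + 1) - k i j| = 1 := by
  have ht : 0 < t := lt_of_le_of_lt hr0 hrt
  have hd : 0 < 2 * t := by omega
  intro i j
  have e : ∀ i j : ℤ, k i j = i + j - 2 * ((r * i + s * j + t * (i + j)) / (2 * t)) := by
    intro i j
    rw [hk i j, floorQ _ _ hd]
  refine ⟨?_, ?_, ?_⟩
  · rw [e]
    have : (i + j - 2 * ((r * i + s * j + t * (i + j)) / (2 * t))) % 2 = (i + j) % 2 := by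
      omega
    exact this
  · have h := div_step (r * i + s * j + t * (i + j)) (r + t) (2 * t) hd (by omega) (by omega)
    have harg : r * (i + 1) + s * j + t * (i + 1 + j) = (r * i + s * j + t * (i + j)) + (r + t) := by ring
    rw [e, e, harg]
    rcases h with ⟨h1, h2⟩
    rcases abs_cases (i + 1 + j - 2 * ((r * i + s * j + t * (i + j) + (r + t)) / (2 * t)) -
        (i + j - 2 * ((r * i + s * j + t * (i + j)) / (2 * t)))) with ⟨he, _⟩ | ⟨he, _⟩ <;> omega
  · have h := div_step (r * i + s * j + t * (i + j)) (s + t) (2 * t) hd (by omega) (by omega)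
    have harg : r * i + s * (j + 1) + t * (i + (j + 1)) = (r * i + s * j + t * (i + j)) + (s + t) := by ring
    rw [e, e, harg]
    rcases h with ⟨h1, h2⟩
    rcases abs_cases (i + (j + 1) - 2 * ((r * i + s * j + t * (i + j) + (s + t)) / (2 * t)) -
        (i + j - 2 * ((r * i + s * j + t * (i + j)) / (2 * t)))) with ⟨he, _⟩ | ⟨he, _⟩ <;> omega
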